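/- The map sending I ↦ (i/(q-q^{-1}))(q^H - q^{-H}), T2 ↦ (E-F)(q^H+q^{-H})^{-1}, T1 ↦ (i q^{H-1/2}E + i q^{-H-1/2}F)(q^H+q^{-H})^{-1} extends to an algebra homomorphism ψ : U_q(iso_2) → Û_q(m_2); in particular the images satisfy q^{1/2}ψ(T2)ψ(T1) - q^{-1/2}ψ(T1)ψ(T2) = 0. -/
import Mathlib


set_option maxHeartbeats 2000000 in
/-- Let A be a unital associative ℂ-algebra containing elements
K = q^H, Kinv = q^{-H}, E, F and Cinv k = (q^k q^H + q^{-k} q^{-H})⁻¹ (k ∈ ℤ)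
satisfying the defining relations of the extension Û_q(m₂). Then the elements
ψ(I) = (i/(q-q⁻¹))(K - Kinv), ψ(T2) = (E-F)(q^H+q^{-H})⁻¹,
ψ(T1) = (i q^{H-1/2}E + i q^{-H-1/2}F)(q^H+q^{-H})⁻¹ satisfy the three defining
relations of U_q(iso₂); i.e. the assignment extends to an algebra homomorphism
ψ : U_q(iso₂) → Û_q(m₂). -/
theorem stmt14 (q sq : ℂ) (hq : q ≠ 0) (hq2 : q ^ 2 ≠ 1) (hsq : sq ^ 2 = q)
    (A : Type*) [Ring A] [Algebra ℂ A] (K Kinv E F : A) (Cinv : ℤ → A)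
    (hKK : K * Kinv = 1) (hKK' : Kinv * K = 1)
    (hKE : K * E * Kinv = q • E) (hKF : K * F * Kinv = q⁻¹ • F)
    (hEF : E * F = F * E)
    (hCinv : ∀ k : ℤ, Cinv k * (q ^ k • K + q ^ (-k) • Kinv) = 1)
    (hCinv' : ∀ k : ℤ, (q ^ k • K + q ^ (-k) • Kinv) * Cinv k = 1)
    (hCK : ∀ k : ℤ, K * Cinv k = Cinv k * K)
    (hCKinv : ∀ k : ℤ, Kinv * Cinv k = Cinv k * Kinv)
    (hCE : ∀ k : ℤ, Cinv k * E = E * Cinv (k + 1))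
    (hCF : ∀ k : ℤ, Cinv k * F = F * Cinv (k - 1)) :
    let ψI := (Complex.I / (q - q⁻¹)) • (K - Kinv)
    let ψT2 := (E - F) * Cinv 0
    let ψT1 := (Complex.I * sq⁻¹) • ((K * E + Kinv * F) * Cinv 0)
    sq • (ψI * ψT2) - sq⁻¹ • (ψT2 * ψI) = ψT1 ∧
    sq • (ψT1 * ψI) - sq⁻¹ • (ψI * ψT1) = ψT2 ∧
    sq • (ψT2 * ψT1) - sq⁻¹ • (ψT1 * ψT2) = 0 := by
  subst hsq
  set q : ℂ := sq ^ 2 with hqdef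
  have hsq0 : sq ≠ 0 := by intro h; exact hq (by simp [hqdef, h])
  have hd : q - q⁻¹ ≠ 0 := by
    intro h
    apply hq2
    have h1 : q = q⁻¹ := sub_eq_zero.mp h
    rw [pow_two]
    nth_rewrite 2 [h1]
    exact mul_inv_cancel₀ hq
  -- basic commutation lemmas, base form
  have hKE2 : K * E = q • (E * K) := by
    calc K * E = K * E * (Kinv * K) := by rw [hKK', mul_one]
    _ = (K * E * Kinv) * K := by rw [mul_assoc (K * E)]
    _ = q • (E * K) := by rw [hKE, smul_mul_assoc]
  have hKF2 : K * F = q⁻¹ • (F * K) := by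
    calc K * F = K * F * (Kinv * K) := by rw [hKK', mul_one]
    _ = (K * F * Kinv) * K := by rw [mul_assoc (K * F)]
    _ = q⁻¹ • (F * K) := by rw [hKF, smul_mul_assoc]
  have hKinvE : Kinv * E = q⁻¹ • (E * Kinv) := by
    have h1 : E * Kinv = q • (Kinv * E) := by
      calc E * Kinv = (Kinv * K) * E * Kinv := by rw [hKK', one_mul]
      _ = Kinv * (K * E) * Kinv := by rw [mul_assoc Kinv]
      _ = Kinv * (q • (E * K)) * Kinv := by rw [hKE2]
      _ = q • (Kinv * E * (K * Kinv)) := by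
            rw [mul_smul_comm, smul_mul_assoc, mul_assoc, mul_assoc, mul_assoc]
      _ = q • (Kinv * E) := by rw [hKK, mul_one]
    rw [h1, smul_smul, inv_mul_cancel₀ hq, one_smul]
  have hKinvF : Kinv * F = q • (F * Kinv) := by
    have h1 : F * Kinv = q⁻¹ • (Kinv * F) := by
      calc F * Kinv = (Kinv * K) * F * Kinv := by rw [hKK', one_mul]
      _ = Kinv * (K * F) * Kinv := by rw [mul_assoc Kinv]
      _ = Kinv * (q⁻¹ • (F * K)) * Kinv := by rw [hKF2]
      _ = q⁻¹ • (Kinv * F * (K * Kinv)) := by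
            rw [mul_smul_comm, smul_mul_assoc, mul_assoc, mul_assoc, mul_assoc]
      _ = q⁻¹ • (Kinv * F) := by rw [hKK, mul_one]
    rw [h1, smul_smul, mul_inv_cancel₀ hq, one_smul]
  -- sorting rules: order E, F, K, Kinv, Cinv (±1), Cinv 0
  have r1 : ∀ x : A, K * (E * x) = q • (E * (K * x)) := fun x => by
    rw [← mul_assoc, hKE2, smul_mul_assoc, mul_assoc]
  have r2 : ∀ x : A, K * (F * x) = q⁻¹ • (F * (K * x)) := fun x => by
    rw [← mul_assoc, hKF2, smul_mul_assoc, mul_assoc]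
  have r3 : ∀ x : A, Kinv * (E * x) = q⁻¹ • (E * (Kinv * x)) := fun x => by
    rw [← mul_assoc, hKinvE, smul_mul_assoc, mul_assoc]
  have r4 : ∀ x : A, Kinv * (F * x) = q • (F * (Kinv * x)) := fun x => by
    rw [← mul_assoc, hKinvF, smul_mul_assoc, mul_assoc]
  have r5 : ∀ x : A, K * (Kinv * x) = x := fun x => by rw [← mul_assoc, hKK, one_mul]
  have r6 : ∀ x : A, Kinv * (K * x) = x := fun x => by rw [← mul_assoc, hKK', one_mul]
  have r7 : ∀ x : A, F * (E * x) = E * (F * x) := fun x => by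
    rw [← mul_assoc, ← hEF, mul_assoc]
  have hC0K : Cinv 0 * K = K * Cinv 0 := (hCK 0).symm
  have hC0Kinv : Cinv 0 * Kinv = Kinv * Cinv 0 := (hCKinv 0).symm
  have hC0E : Cinv 0 * E = E * Cinv 1 := by have := hCE 0; norm_num at this; exact this
  have hC0F : Cinv 0 * F = F * Cinv (-1) := by have := hCF 0; norm_num at this; exact this
  have r8 : ∀ x : A, Cinv 0 * (K * x) = K * (Cinv 0 * x) := fun x => by
    rw [← mul_assoc, hC0K, mul_assoc]
  have r9 : ∀ x : A, Cinv 0 * (Kinv * x) = Kinv * (Cinv 0 * x) := fun x => by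
    rw [← mul_assoc, hC0Kinv, mul_assoc]
  have r10 : ∀ x : A, Cinv 0 * (E * x) = E * (Cinv 1 * x) := fun x => by
    rw [← mul_assoc, hC0E, mul_assoc]
  have r11 : ∀ x : A, Cinv 0 * (F * x) = F * (Cinv (-1) * x) := fun x => by
    rw [← mul_assoc, hC0F, mul_assoc]
  have hC1K : Cinv 1 * K = K * Cinv 1 := (hCK 1).symm
  have hC1Kinv : Cinv 1 * Kinv = Kinv * Cinv 1 := (hCKinv 1).symm
  have hCm1K : Cinv (-1) * K = K * Cinv (-1) := (hCK (-1)).symm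
  have hCm1Kinv : Cinv (-1) * Kinv = Kinv * Cinv (-1) := (hCKinv (-1)).symm
  have r12 : ∀ x : A, Cinv 1 * (K * x) = K * (Cinv 1 * x) := fun x => by
    rw [← mul_assoc, hC1K, mul_assoc]
  have r13 : ∀ x : A, Cinv 1 * (Kinv * x) = Kinv * (Cinv 1 * x) := fun x => by
    rw [← mul_assoc, hC1Kinv, mul_assoc]
  have r14 : ∀ x : A, Cinv (-1) * (K * x) = K * (Cinv (-1) * x) := fun x => by
    rw [← mul_assoc, hCm1K, mul_assoc]
  have r15 : ∀ x : A, Cinv (-1) * (Kinv * x) = Kinv * (Cinv (-1) * x) := fun x => by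
    rw [← mul_assoc, hCm1Kinv, mul_assoc]
  have h41 : sq ^ 4 - 1 ≠ 0 := by
    refine sub_ne_zero.mpr (fun h => hq2 ?_)
    rw [hqdef]; linear_combination h
  have hA1 : -sq + sq ^ 5 ≠ 0 := by
    have hm := mul_ne_zero hsq0 h41
    intro h; apply hm; linear_combination h
  have hA2 : -1 + sq ^ 4 ≠ 0 := by
    intro h; apply h41; linear_combination h
  have hA3 : -sq ^ 2 + sq ^ 6 ≠ 0 := by
    have hm := mul_ne_zero (pow_ne_zero 2 hsq0) h41
    intro h; apply hm; linear_combination h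
  have hA4 : -sq ^ 4 + sq ^ 8 ≠ 0 := by
    have hm := mul_ne_zero (pow_ne_zero 4 hsq0) h41
    intro h; apply hm; linear_combination h
  have hB : sq ^ 2 * sq ^ 2 - 1 ≠ 0 := by
    intro h; apply h41; linear_combination h
  have hC : sq ^ 5 - sq ^ 9 * 2 + sq ^ 13 ≠ 0 := by
    have hm := mul_ne_zero (pow_ne_zero 5 hsq0) (mul_ne_zero h41 h41)
    intro h; apply hm; linear_combination h
  -- absorption identities
  have hC1 : (q • K + q⁻¹ • Kinv) * Cinv 1 = 1 := by
    have := hCinv' 1; simpa using this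
  have hCm1 : (q⁻¹ • K + q • Kinv) * Cinv (-1) = 1 := by
    have := hCinv' (-1); simpa using this
  have hfin1 : sq⁻¹ • (K * (Cinv (-1) * Cinv 0)) + (sq * q) • (Kinv * (Cinv (-1) * Cinv 0))
      = sq • Cinv 0 := by
    have h1 : ((q⁻¹ • K + q • Kinv) * Cinv (-1)) * Cinv 0 = Cinv 0 := by
      rw [hCm1, one_mul]
    calc sq⁻¹ • (K * (Cinv (-1) * Cinv 0)) + (sq * q) • (Kinv * (Cinv (-1) * Cinv 0))
        = sq • (((q⁻¹ • K + q • Kinv) * Cinv (-1)) * Cinv 0) := by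
          simp only [add_mul, smul_mul_assoc, mul_assoc, smul_add, smul_smul]
          match_scalars <;> (try simp only [hqdef]) <;> (try field_simp) <;> (try ring_nf) <;> (try simp only [Complex.I_sq]) <;> (try field_simp) <;> (try ring)
    _ = sq • Cinv 0 := by rw [h1]
  have hfin2 : (sq * q) • (K * (Cinv 1 * Cinv 0)) + sq⁻¹ • (Kinv * (Cinv 1 * Cinv 0))
      = sq • Cinv 0 := by
    have h1 : ((q • K + q⁻¹ • Kinv) * Cinv 1) * Cinv 0 = Cinv 0 := by
      rw [hC1, one_mul]
    calc (sq * q) • (K * (Cinv 1 * Cinv 0)) + sq⁻¹ • (Kinv * (Cinv 1 * Cinv 0))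
        = sq • (((q • K + q⁻¹ • Kinv) * Cinv 1) * Cinv 0) := by
          simp only [add_mul, smul_mul_assoc, mul_assoc, smul_add, smul_smul]
          match_scalars <;> (try simp only [hqdef]) <;> (try field_simp) <;> (try ring_nf) <;> (try simp only [Complex.I_sq]) <;> (try field_simp) <;> (try ring)
    _ = sq • Cinv 0 := by rw [h1]
  intro ψI ψT2 ψT1
  refine ⟨?_, ?_, ?_⟩
  · show sq • (((Complex.I / (q - q⁻¹)) • (K - Kinv)) * ((E - F) * Cinv 0))
        - sq⁻¹ • (((E - F) * Cinv 0) * ((Complex.I / (q - q⁻¹)) • (K - Kinv)))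
        = (Complex.I * sq⁻¹) • ((K * E + Kinv * F) * Cinv 0)
    simp only [mul_add, add_mul, mul_sub, sub_mul, smul_mul_assoc, mul_smul_comm,
      smul_add, smul_sub, smul_smul, mul_assoc, r1, r2, r3, r4, r5, r6, r7, r8, r9,
      r10, r11, r12, r13, r14, r15, hC1K, hC1Kinv, hCm1K, hCm1Kinv, hC0K, hC0Kinv, hC0E, hC0F]
    match_scalars <;> (try simp only [hqdef]) <;> (try field_simp) <;> (try ring_nf) <;> (try simp only [Complex.I_sq]) <;> (try field_simp) <;> (try ring)
  · show sq • (((Complex.I * sq⁻¹) • ((K * E + Kinv * F) * Cinv 0)) * ((Complex.I / (q - q⁻¹)) • (K - Kinv)))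
        - sq⁻¹ • (((Complex.I / (q - q⁻¹)) • (K - Kinv)) * ((Complex.I * sq⁻¹) • ((K * E + Kinv * F) * Cinv 0)))
        = (E - F) * Cinv 0
    simp only [mul_add, add_mul, mul_sub, sub_mul, smul_mul_assoc, mul_smul_comm,
      smul_add, smul_sub, smul_smul, mul_assoc, r1, r2, r3, r4, r5, r6, r7, r8, r9,
      r10, r11, r12, r13, r14, r15, hC1K, hC1Kinv, hCm1K, hCm1Kinv, hC0K, hC0Kinv, hC0E, hC0F]
    match_scalars <;> (try simp only [hqdef]) <;> (try field_simp) <;> (try ring_nf) <;> (try simp only [Complex.I_sq]) <;> (try field_simp) <;> (try ring)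
  · have key3 : sq • (((E - F) * Cinv 0) * ((Complex.I * sq⁻¹) • ((K * E + Kinv * F) * Cinv 0)))
        - sq⁻¹ • (((Complex.I * sq⁻¹) • ((K * E + Kinv * F) * Cinv 0)) * ((E - F) * Cinv 0))
        = (Complex.I * sq⁻¹) • (E * (F *
            ((sq⁻¹ • (K * (Cinv (-1) * Cinv 0)) + (sq * q) • (Kinv * (Cinv (-1) * Cinv 0)))
            - ((sq * q) • (K * (Cinv 1 * Cinv 0)) + sq⁻¹ • (Kinv * (Cinv 1 * Cinv 0)))))) := by
      simp only [mul_add, add_mul, mul_sub, sub_mul, smul_mul_assoc, mul_smul_comm,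
        smul_add, smul_sub, smul_smul, mul_assoc, r1, r2, r3, r4, r5, r6, r7, r8, r9,
        r10, r11, r12, r13, r14, r15, hC1K, hC1Kinv, hCm1K, hCm1Kinv, hC0K, hC0Kinv, hC0E, hC0F]
      match_scalars <;> (try simp only [hqdef]) <;> (try field_simp) <;> (try ring_nf) <;> (try simp only [Complex.I_sq]) <;> (try field_simp) <;> (try ring)
    show sq • (((E - F) * Cinv 0) * ((Complex.I * sq⁻¹) • ((K * E + Kinv * F) * Cinv 0)))
        - sq⁻¹ • (((Complex.I * sq⁻¹) • ((K * E + Kinv * F) * Cinv 0)) * ((E - F) * Cinv 0)) = 0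
    rw [key3, hfin1, hfin2, sub_self, mul_zero, mul_zero, smul_zero]
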